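/- For the Weierstrass ℘-function with period lattice L_ω = ω·ℤ[τ] satisfying ℘′(z)² = 4℘(z)³ − 1, one has ℘(ω/√−3, L_ω) = 0. -/

import Mathlib

noncomputable section

open Complex Real ComplexConjugate

/-- `τ = (−1+√−3)/2`, a primitive cube root of unity. -/
def tau : ℂ := (-1 + Real.sqrt 3 * Complex.I) / 2

/-- `√−3 = 1 + 2τ`, the square root of `−3` with positive imaginary part. -/
def sqrtm3 : ℂ := Real.sqrt 3 * Complex.I

/-- The ring of integers `O_K = ℤ[τ]` of `K = ℚ(√−3)`, as a subring of `ℂ`. -/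
def Eis : Subring ℂ := Subring.closure {tau}

/-- `τ` as an element of `ℤ[τ]`. -/
def tauO : Eis := ⟨tau, Subring.subset_closure rfl⟩

/-- `√−3` as an element of `ℤ[τ]`. -/
def sqrtm3O : Eis := 1 + 2 * tauO

/-- Membership in the lattice `L_ω = ω·ℤ[τ]`. -/
def inLattice (ω : ℝ) (z : ℂ) : Prop := ∃ a : Eis, z = (ω : ℂ) * a

/-- The Weierstrass `℘`-function of the lattice `L_ω = ω·ℤ[τ]`. -/
def wp (ω : ℝ) (z : ℂ) : ℂ :=
  1 / z ^ 2 + ∑' a : {w : ℂ // inLattice ω w ∧ w ≠ 0},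
    (1 / (z - (a : ℂ)) ^ 2 - 1 / (a : ℂ) ^ 2)

/-- The Weierstrass `ζ`-function of the lattice `L_ω = ω·ℤ[τ]`. -/
def wzeta (ω : ℝ) (z : ℂ) : ℂ :=
  1 / z + ∑' a : {w : ℂ // inLattice ω w ∧ w ≠ 0},
    (1 / (z - (a : ℂ)) + 1 / (a : ℂ) + z / (a : ℂ) ^ 2)

/-- The real cube root of 2, as a complex number. -/
def cbrt2 : ℂ := ((2 : ℝ) ^ ((1 : ℝ) / 3) : ℝ)

/-- The real cube root of 4, as a complex number. -/
def cbrt4 : ℂ := ((4 : ℝ) ^ ((1 : ℝ) / 3) : ℝ)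


lemma sqrt3_sq : (Real.sqrt 3 : ℂ) ^ 2 = 3 := by
  norm_cast; rw [Real.sq_sqrt]; norm_num

lemma tau_sq : tau ^ 2 = -1 - tau := by
  unfold tau
  linear_combination (Complex.I ^ 2 / 4) * sqrt3_sq + (3 / 4) * Complex.I_sq

lemma tau_cube : tau ^ 3 = 1 := by
  have h := tau_sq
  linear_combination (tau - 1) * h

lemma eis_mem {x : ℂ} (hx : x ∈ Eis) : ∃ m n : ℤ, x = m + n * tau := by
  induction hx using Subring.closure_induction with
  | mem y hy => exact ⟨0, 1, by simp [Set.mem_singleton_iff.mp hy]⟩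
  | one => exact ⟨1, 0, by simp⟩
  | add a b _ _ iha ihb =>
    obtain ⟨m, n, rfl⟩ := iha; obtain ⟨p, q, rfl⟩ := ihb
    exact ⟨m + p, n + q, by push_cast; ring⟩
  | neg a _ iha =>
    obtain ⟨m, n, rfl⟩ := iha
    exact ⟨-m, -n, by push_cast; ring⟩
  | mul a b _ _ iha ihb =>
    obtain ⟨m, n, rfl⟩ := iha; obtain ⟨p, q, rfl⟩ := ihb
    refine ⟨m * p - n * q, m * q + n * p - n * q, ?_⟩
    push_cast
    linear_combination (n : ℂ) * q * tau_sq
  | zero => exact ⟨0, 0, by simp⟩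

lemma tau_re : tau.re = -(1/2) := by simp [tau]; norm_num
lemma tau_im : tau.im = Real.sqrt 3 / 2 := by simp [tau]

lemma abs_sq_int (m n : ℤ) :
    ‖((m : ℂ) + n * tau)‖ ^ 2 = (m : ℝ)^2 - m*n + n^2 := by
  rw [Complex.sq_norm, Complex.normSq_apply]
  have hre : ((m : ℂ) + n * tau).re = (m : ℝ) + n * (-(1/2)) := by
    simp [Complex.add_re, Complex.mul_re, tau_re, tau_im]
  have him : ((m : ℂ) + n * tau).im = (n : ℝ) * (Real.sqrt 3 / 2) := by
    simp [Complex.add_im, Complex.mul_im, tau_re, tau_im]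
  rw [hre, him]
  have h3 : Real.sqrt 3 ^ 2 = 3 := Real.sq_sqrt (by norm_num)
  nlinarith [h3]

lemma int_quad_ge_one {m n : ℤ} (h : ¬(m = 0 ∧ n = 0)) :
    (1 : ℝ) ≤ (m : ℝ)^2 - m*n + n^2 := by
  have key : (1 : ℤ) ≤ m^2 - m*n + n^2 := by
    rcases eq_or_ne n 0 with rfl | hn
    · have hm : m ≠ 0 := fun hm => h ⟨hm, rfl⟩
      have := Int.one_le_abs hm
      nlinarith [Int.one_le_abs hm, abs_nonneg m, _root_.sq_abs m]
    · nlinarith [Int.one_le_abs hn, _root_.sq_abs n, sq_nonneg (2*m - n), sq_nonneg n]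
  exact_mod_cast key

lemma abs_ge_one {x : ℂ} (hx : x ∈ Eis) (hx0 : x ≠ 0) : 1 ≤ ‖x‖ := by
  obtain ⟨m, n, rfl⟩ := eis_mem hx
  have hmn : ¬(m = 0 ∧ n = 0) := by
    rintro ⟨rfl, rfl⟩; simp at hx0
  have h1 := int_quad_ge_one hmn
  have h2 := abs_sq_int m n
  nlinarith [norm_nonneg ((m : ℂ) + n * tau)]

abbrev Idx (ω : ℝ) := {w : ℂ // inLattice ω w ∧ w ≠ 0}

lemma idx_spec (ω : ℝ) (a : Idx ω) : ∃ p : ℤ × ℤ, (a : ℂ) = (ω : ℂ) * ((p.1 : ℂ) + p.2 * tau) := by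
  obtain ⟨b, hb⟩ := a.2.1
  obtain ⟨m, n, hmn⟩ := eis_mem b.2
  exact ⟨(m, n), by rw [hb, hmn]⟩

lemma summable_cube {ω : ℝ} (hω : 0 < ω) :
    Summable fun a : Idx ω => 1 / ‖(a : ℂ)‖ ^ 3 := by
  set ι : Idx ω → (Fin 2 → ℤ) :=
    fun a => ![(idx_spec ω a).choose.1, (idx_spec ω a).choose.2] with hι
  have hspec : ∀ a : Idx ω, (a : ℂ) = (ω : ℂ) * ((ι a 0 : ℂ) + (ι a 1) * tau) := by
    intro a
    simpa [hι] using (idx_spec ω a).choose_spec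
  have hinj : Function.Injective ι := by
    intro a b hab
    apply Subtype.ext
    rw [hspec a, hspec b, hab]
  have hG : Summable fun x : Fin 2 → ℤ =>
      (Real.sqrt 2 ^ 3 / ω ^ 3) * ‖x‖ ^ (-(3:ℝ)) :=
    (EisensteinSeries.summable_one_div_norm_rpow (by norm_num)).mul_left _
  apply Summable.of_nonneg_of_le (fun a => by positivity)
    _ (hG.comp_injective hinj)
  intro a
  set m := (idx_spec ω a).choose.1 with hm
  set n := (idx_spec ω a).choose.2 with hn
  have hx0 : ι a 0 = m := by simp [hι]; rfl
  have hx1 : ι a 1 = n := by simp [hι]; rfl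
  have ha : (a : ℂ) = (ω : ℂ) * ((m : ℂ) + n * tau) := by
    simpa [hx0, hx1] using hspec a
  set A := ‖((m : ℂ) + n * tau)‖ with hA
  have hmem : ((m : ℂ) + n * tau) ∈ Eis := by
    refine Subring.add_mem _ ?_ ?_
    · exact_mod_cast intCast_mem Eis m
    · exact Subring.mul_mem _ (by exact_mod_cast intCast_mem Eis n)
        (Subring.subset_closure rfl)
  have hne : ((m : ℂ) + n * tau) ≠ 0 := by
    intro h
    apply a.2.2
    rw [ha, h, mul_zero]
  have hA1 : 1 ≤ A := abs_ge_one hmem hne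
  have habs : ‖(a : ℂ)‖ = ω * A := by
    rw [ha, norm_mul, Complex.norm_real, Real.norm_eq_abs, abs_of_pos hω]
  have hAsq := abs_sq_int m n
  have hs2 : Real.sqrt 2 ^ 2 = 2 := Real.sq_sqrt (by norm_num)
  have hs2pos : (0:ℝ) < Real.sqrt 2 := Real.sqrt_pos.mpr (by norm_num)
  have hnorm : ‖ι a‖ ≤ Real.sqrt 2 * A := by
    rw [pi_norm_le_iff_of_nonneg (by positivity)]
    intro i
    fin_cases i
    · show ‖ι a 0‖ ≤ Real.sqrt 2 * A
      rw [hx0, Int.norm_eq_abs]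
      have : |(m:ℝ)|^2 ≤ (Real.sqrt 2 * A)^2 := by
        rw [_root_.sq_abs]
        push_cast
        nlinarith [sq_nonneg ((m:ℝ) - n), sq_nonneg (n:ℝ)]
      have h2 : (0:ℝ) ≤ Real.sqrt 2 * A := by positivity
      push_cast
      nlinarith [abs_nonneg (m:ℝ)]
    · show ‖ι a 1‖ ≤ Real.sqrt 2 * A
      rw [hx1, Int.norm_eq_abs]
      have : |(n:ℝ)|^2 ≤ (Real.sqrt 2 * A)^2 := by
        rw [_root_.sq_abs]
        push_cast
        nlinarith [sq_nonneg ((n:ℝ) - m), sq_nonneg (m:ℝ)]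
      have h2 : (0:ℝ) ≤ Real.sqrt 2 * A := by positivity
      push_cast
      nlinarith [abs_nonneg (n:ℝ)]
  have hxpos : (0:ℝ) < ‖ι a‖ := by
    rw [norm_pos_iff]
    intro h
    have hm0 : m = 0 := by rw [← hx0, h]; rfl
    have hn0 : n = 0 := by rw [← hx1, h]; rfl
    apply hne
    rw [hm0, hn0]
    simp
  have hrpow : ‖ι a‖ ^ (-(3:ℝ)) = (‖ι a‖ ^ (3:ℕ))⁻¹ := by
    rw [Real.rpow_neg (norm_nonneg _)]
    norm_cast
  show (1:ℝ) / ‖(a : ℂ)‖ ^ 3 ≤ Real.sqrt 2 ^ 3 / ω ^ 3 * ‖ι a‖ ^ (-(3:ℝ))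
  rw [hrpow, habs]
  have hcube : ‖ι a‖ ^ 3 ≤ (Real.sqrt 2 * A) ^ 3 :=
    pow_le_pow_left₀ (norm_nonneg _) hnorm 3
  have hR : Real.sqrt 2 ^ 3 / ω ^ 3 * (‖ι a‖ ^ 3)⁻¹
      = Real.sqrt 2 ^ 3 / (ω ^ 3 * ‖ι a‖ ^ 3) := by
    field_simp
  rw [hR, div_le_div_iff₀ (by positivity) (by positivity)]
  have hmul := mul_le_mul_of_nonneg_left hcube (le_of_lt (pow_pos hω 3))
  nlinarith [hmul]


lemma omega_le_abs_idx {ω : ℝ} (hω : 0 < ω) (a : Idx ω) : ω ≤ ‖(a : ℂ)‖ := by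
  obtain ⟨b, hb⟩ := a.2.1
  have hb0 : (b : ℂ) ≠ 0 := by
    intro h
    apply a.2.2
    rw [hb, h, mul_zero]
  have h1 := abs_ge_one b.2 hb0
  rw [hb, norm_mul, Complex.norm_real, Real.norm_eq_abs, abs_of_pos hω]
  nlinarith

lemma summable_F {ω : ℝ} (hω : 0 < ω) {w : ℂ}
    (hw : ‖w‖ * Real.sqrt 3 ≤ ω) :
    Summable fun a : Idx ω => 1 / (w - (a : ℂ)) ^ 2 - 1 / (a : ℂ) ^ 2 := by
  have hs3 : (5:ℝ)/3 ≤ Real.sqrt 3 := by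
    nlinarith [Real.sqrt_nonneg 3, Real.sq_sqrt (show (0:ℝ) ≤ 3 by norm_num)]
  have hr0 : 0 ≤ ‖w‖ := norm_nonneg w
  apply Summable.of_norm_bounded
    (g := fun a : Idx ω => (19 * ‖w‖) * (1 / ‖(a : ℂ)‖ ^ 3))
    ((summable_cube hω).mul_left _)
  intro a
  set s := ‖(a : ℂ)‖ with hsdef
  set r := ‖w‖ with hrdef
  have hs : ω ≤ s := omega_le_abs_idx hω a
  have hspos : 0 < s := lt_of_lt_of_le hω hs
  have hr_s : r ≤ 3 / 5 * s := by nlinarith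
  have hwa : 2 / 5 * s ≤ ‖(w - (a : ℂ))‖ := by
    have h1 : s - r ≤ ‖(w - (a : ℂ))‖ := by
      have h := norm_sub_norm_le (a : ℂ) w
      rw [norm_sub_rev] at h
      simpa using h
    linarith
  have hwa0 : (w - (a : ℂ)) ≠ 0 := by
    intro h
    rw [h] at hwa
    simp at hwa
    nlinarith
  have ha0 : (a : ℂ) ≠ 0 := a.2.2
  have hid : 1 / (w - (a : ℂ)) ^ 2 - 1 / (a : ℂ) ^ 2
      = w * (2 * (a : ℂ) - w) / ((w - (a : ℂ)) ^ 2 * (a : ℂ) ^ 2) := by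
    field_simp
    ring
  rw [hid]
  have hnum : ‖(2 * (a : ℂ) - w)‖ ≤ 3 * s := by
    calc ‖(2 * (a : ℂ) - w)‖
        ≤ ‖(2 * (a : ℂ))‖ + ‖w‖ := by
          have h := norm_sub_le (2 * (a : ℂ)) w
          simpa using h
      _ ≤ 3 * s := by
          rw [norm_mul]
          simp only [Complex.norm_two]
          nlinarith
  have hlhs : ‖(w * (2 * (a : ℂ) - w) / ((w - (a : ℂ)) ^ 2 * (a : ℂ) ^ 2))‖
      = r * ‖(2 * (a : ℂ) - w)‖ / (‖(w - (a : ℂ))‖ ^ 2 * s ^ 2) := by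
    rw [norm_div, norm_mul, norm_mul, norm_pow, norm_pow]
  rw [hlhs]
  rw [show (19 * r * (1 / s ^ 3) : ℝ) = 19 * r / s ^ 3 by ring]
  have hwapos : 0 < ‖(w - (a : ℂ))‖ := lt_of_lt_of_le (by positivity) hwa
  rw [div_le_div_iff₀ (by positivity) (by positivity)]
  have hwasq : (4 / 25) * s ^ 2 ≤ ‖(w - (a : ℂ))‖ ^ 2 := by
    nlinarith [norm_nonneg (w - (a:ℂ))]
  have key := mul_le_mul hnum hwasq (by positivity) (by positivity)
  have key2 := mul_le_mul_of_nonneg_left key (mul_nonneg hr0 hspos.le)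
  nlinarith [key2, mul_nonneg (mul_nonneg hr0 (sq_nonneg s)) (sq_nonneg (‖(w - (a:ℂ))‖))]

lemma tau_ne_zero : tau ≠ 0 := by
  intro h
  have h2 : (0 : ℂ) ^ 3 = 1 := by rw [← h]; exact tau_cube
  norm_num at h2

lemma one_div_tau_sq : (1 : ℂ) / tau ^ 2 = tau := by
  rw [div_eq_iff (pow_ne_zero 2 tau_ne_zero)]
  linear_combination -tau_cube

/-- multiplication by `tau` as an equiv of the index set -/
def mulTau (ω : ℝ) : Idx ω ≃ Idx ω where
  toFun a := ⟨tau * a, by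
    obtain ⟨b, hb⟩ := a.2.1
    exact ⟨tauO * b, by push_cast [hb, tauO]; ring⟩,
    mul_ne_zero tau_ne_zero a.2.2⟩
  invFun a := ⟨tau ^ 2 * a, by
    obtain ⟨b, hb⟩ := a.2.1
    exact ⟨tauO ^ 2 * b, by push_cast [hb, tauO]; ring⟩,
    mul_ne_zero (pow_ne_zero 2 tau_ne_zero) a.2.2⟩
  left_inv a := by
    apply Subtype.ext
    show tau ^ 2 * (tau * (a : ℂ)) = a
    linear_combination (a : ℂ) * tau_cube
  right_inv a := by
    apply Subtype.ext
    show tau * (tau ^ 2 * (a : ℂ)) = a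
    linear_combination (a : ℂ) * tau_cube

lemma wp_tau_mul (ω : ℝ) (u : ℂ) : wp ω (tau * u) = tau * wp ω u := by
  unfold wp
  have h1 : ∀ x : ℂ, (1 : ℂ) / (tau * x) ^ 2 = tau * (1 / x ^ 2) := by
    intro x
    rcases eq_or_ne x 0 with rfl | hx
    · simp
    · rw [mul_pow, one_div, mul_inv, ← one_div, ← one_div, one_div_tau_sq]
  have key : (∑' a : Idx ω, (1 / (tau * u - (a : ℂ)) ^ 2 - 1 / (a : ℂ) ^ 2))
      = ∑' a : Idx ω, (tau * (1 / (u - (a : ℂ)) ^ 2 - 1 / (a : ℂ) ^ 2)) := by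
    rw [← Equiv.tsum_eq (mulTau ω)
      (fun a : Idx ω => 1 / (tau * u - (a : ℂ)) ^ 2 - 1 / (a : ℂ) ^ 2)]
    apply tsum_congr
    intro a
    show 1 / (tau * u - tau * (a : ℂ)) ^ 2 - 1 / (tau * (a : ℂ)) ^ 2 = _
    rw [show tau * u - tau * (a : ℂ) = tau * (u - (a : ℂ)) by ring, h1, h1]
    ring
  rw [key, tsum_mul_left, h1]
  ring

lemma inLattice_add {ω : ℝ} {x y : ℂ} (hx : inLattice ω x) (hy : inLattice ω y) :
    inLattice ω (x + y) := by
  obtain ⟨b, rfl⟩ := hx; obtain ⟨c, rfl⟩ := hy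
  exact ⟨b + c, by push_cast; ring⟩

lemma inLattice_neg {ω : ℝ} {x : ℂ} (hx : inLattice ω x) : inLattice ω (-x) := by
  obtain ⟨b, rfl⟩ := hx
  exact ⟨-b, by push_cast; ring⟩

lemma inLattice_sub {ω : ℝ} {x y : ℂ} (hx : inLattice ω x) (hy : inLattice ω y) :
    inLattice ω (x - y) := by
  rw [sub_eq_add_neg]; exact inLattice_add hx (inLattice_neg hy)

open scoped Classical in
/-- translation by a lattice point `lam`, fixed up at `-lam`, as an equiv of the index set -/
def shiftE {ω : ℝ} (lam : ℂ) (hlamL : inLattice ω lam) (hlam0 : lam ≠ 0) : Idx ω ≃ Idx ω where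
  toFun a := if h : (a : ℂ) = -lam then ⟨lam, hlamL, hlam0⟩ else
    ⟨(a : ℂ) + lam, inLattice_add a.2.1 hlamL, fun h0 => h (by linear_combination h0)⟩
  invFun b := if h : (b : ℂ) = lam then ⟨-lam, inLattice_neg hlamL, neg_ne_zero.mpr hlam0⟩ else
    ⟨(b : ℂ) - lam, inLattice_sub b.2.1 hlamL, sub_ne_zero.mpr h⟩
  left_inv a := by
    dsimp only
    by_cases h : (a : ℂ) = -lam
    · rw [dif_pos h]
      apply Subtype.ext
      rw [dif_pos rfl]
      exact h.symm
    · rw [dif_neg h]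
      apply Subtype.ext
      have h2 : (a : ℂ) + lam ≠ lam := fun h0 => a.2.2 (by linear_combination h0)
      show (if h : ((a : ℂ) + lam) = lam then _ else _ : Idx ω).1 = _
      rw [dif_neg h2]
      show (a : ℂ) + lam - lam = a
      ring
  right_inv b := by
    dsimp only
    by_cases h : (b : ℂ) = lam
    · rw [dif_pos h]
      apply Subtype.ext
      rw [dif_pos rfl]
      exact h.symm
    · rw [dif_neg h]
      apply Subtype.ext
      have h2 : (b : ℂ) - lam ≠ -lam := fun h0 => b.2.2 (by linear_combination h0)
      show (if h : ((b : ℂ) - lam) = -lam then _ else _ : Idx ω).1 = _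
      rw [dif_neg h2]
      show (b : ℂ) - lam + lam = b
      ring

open scoped Classical in
/-- the involution `a ↦ -lam - a`, fixed up at `-lam`, as an equiv of the index set -/
def negShiftE {ω : ℝ} (lam : ℂ) (hlamL : inLattice ω lam) (hlam0 : lam ≠ 0) : Idx ω ≃ Idx ω where
  toFun a := if h : (a : ℂ) = -lam then ⟨-lam, inLattice_neg hlamL, neg_ne_zero.mpr hlam0⟩ else
    ⟨-lam - (a : ℂ), inLattice_sub (inLattice_neg hlamL) a.2.1,
      fun h0 => h (by linear_combination -h0)⟩
  invFun a := if h : (a : ℂ) = -lam then ⟨-lam, inLattice_neg hlamL, neg_ne_zero.mpr hlam0⟩ else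
    ⟨-lam - (a : ℂ), inLattice_sub (inLattice_neg hlamL) a.2.1,
      fun h0 => h (by linear_combination -h0)⟩
  left_inv a := by
    dsimp only
    by_cases h : (a : ℂ) = -lam
    · rw [dif_pos h]
      apply Subtype.ext
      rw [dif_pos rfl]
      exact h.symm
    · rw [dif_neg h]
      apply Subtype.ext
      have h2 : -lam - (a : ℂ) ≠ -lam := fun h0 => a.2.2 (by linear_combination -h0)
      show (if h : (-lam - (a : ℂ)) = -lam then _ else _ : Idx ω).1 = _
      rw [dif_neg h2]
      show -lam - (-lam - (a : ℂ)) = a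
      ring
  right_inv a := by
    dsimp only
    by_cases h : (a : ℂ) = -lam
    · rw [dif_pos h]
      apply Subtype.ext
      rw [dif_pos rfl]
      exact h.symm
    · rw [dif_neg h]
      apply Subtype.ext
      have h2 : -lam - (a : ℂ) ≠ -lam := fun h0 => a.2.2 (by linear_combination -h0)
      show (if h : (-lam - (a : ℂ)) = -lam then _ else _ : Idx ω).1 = _
      rw [dif_neg h2]
      show -lam - (-lam - (a : ℂ)) = a
      ring

open scoped Classical in
lemma wp_add_lattice {ω : ℝ} (z lam : ℂ)
    (hlamL : inLattice ω lam) (hlam0 : lam ≠ 0)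
    (h1 : Summable fun a : Idx ω => 1 / (z - (a : ℂ)) ^ 2 - 1 / (a : ℂ) ^ 2)
    (h2 : Summable fun a : Idx ω => 1 / (z + lam - (a : ℂ)) ^ 2 - 1 / (a : ℂ) ^ 2) :
    wp ω (z + lam) = wp ω z := by
  set abar : Idx ω := ⟨-lam, inLattice_neg hlamL, neg_ne_zero.mpr hlam0⟩ with habar
  set F : Idx ω → ℂ := fun a => 1 / (z - (a : ℂ)) ^ 2 - 1 / (a : ℂ) ^ 2 with hF
  set G : Idx ω → ℂ := fun a => 1 / (z + lam - (a : ℂ)) ^ 2 - 1 / (a : ℂ) ^ 2 with hG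
  set h : Idx ω → ℂ := fun a =>
    if a = abar then 1 / z ^ 2 - 1 / (z + lam) ^ 2
    else 1 / (a : ℂ) ^ 2 - 1 / ((a : ℂ) + lam) ^ 2 with hh
  set e := shiftE lam hlamL hlam0 with he
  -- pointwise identity G ∘ e = F + h
  have hpt : ∀ a : Idx ω, G (e a) = F a + h a := by
    intro a
    by_cases hc : (a : ℂ) = -lam
    · have hc' : a = abar := Subtype.ext hc
      have he1 : ((e a : Idx ω) : ℂ) = lam := by
        rw [he]; show ((if h : (a : ℂ) = -lam then _ else _ : Idx ω) : ℂ) = lam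
        rw [dif_pos hc]
      rw [hG, hF, hh]
      dsimp only
      rw [he1, if_pos hc', hc]
      rw [show z + lam - lam = z by ring, show z - -lam = z + lam by ring]
      ring
    · have hc' : a ≠ abar := fun h0 => hc (by rw [h0])
      have he1 : ((e a : Idx ω) : ℂ) = (a : ℂ) + lam := by
        rw [he]; show ((if h : (a : ℂ) = -lam then _ else _ : Idx ω) : ℂ) = _
        rw [dif_neg hc]
      rw [hG, hF, hh]
      dsimp only
      rw [he1, if_neg hc']
      rw [show z + lam - ((a : ℂ) + lam) = z - a by ring]
      ring
  -- summability of F + h and h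
  have hFh : Summable fun a : Idx ω => F a + h a := by
    have : Summable (G ∘ e) := (Equiv.summable_iff e).mpr h2
    exact this.congr hpt
  have hhs : Summable h := by
    have := hFh.sub h1
    exact this.congr (fun a => by rw [hF]; dsimp only; ring)
  -- sum of h
  have hsum_h : ∑' a, h a = 1 / z ^ 2 - 1 / (z + lam) ^ 2 := by
    rw [Summable.tsum_eq_add_tsum_ite hhs abar]
    have hzero : ∑' a : Idx ω, (if a = abar then 0 else h a) = 0 := by
      set h' : Idx ω → ℂ := fun a => if a = abar then 0 else h a with hh'
      set σ := negShiftE lam hlamL hlam0 with hσ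
      have hanti : ∀ a : Idx ω, h' (σ a) = -h' a := by
        intro a
        by_cases hc : (a : ℂ) = -lam
        · have hc' : a = abar := Subtype.ext hc
          have hσ1 : σ a = abar := by
            rw [hσ]
            apply Subtype.ext
            show ((if h : (a : ℂ) = -lam then _ else _ : Idx ω) : ℂ) = _
            rw [dif_pos hc]
          rw [hσ1, hh']
          dsimp only
          rw [if_pos rfl, if_pos hc']
          ring
        · have hc' : a ≠ abar := fun h0 => hc (by rw [h0])
          have hσ1 : ((σ a : Idx ω) : ℂ) = -lam - (a : ℂ) := by
            rw [hσ]; show ((if h : (a : ℂ) = -lam then _ else _ : Idx ω) : ℂ) = _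
            rw [dif_neg hc]
          have hσ2 : σ a ≠ abar := by
            intro h0
            apply a.2.2
            have : ((σ a : Idx ω) : ℂ) = -lam := by rw [h0]
            rw [hσ1] at this
            linear_combination -this
          simp only [hh', hh, if_neg hσ2, if_neg hc']
          rw [hσ1,
            show -lam - (a : ℂ) + lam = -(a : ℂ) by ring,
            show (-lam - (a : ℂ)) ^ 2 = ((a : ℂ) + lam) ^ 2 by ring,
            show (-(a : ℂ)) ^ 2 = (a : ℂ) ^ 2 by ring]
          ring
      have h0 : ∑' a, h' a = -∑' a, h' a := by
        conv_lhs => rw [← Equiv.tsum_eq σ h']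
        rw [tsum_congr hanti, tsum_neg]
      linear_combination h0 / 2
    rw [hzero, add_zero, hh]
    dsimp only
    rw [if_pos rfl]
  -- assemble
  have hG_eq : ∑' a, G a = ∑' a, (F a + h a) := by
    rw [← Equiv.tsum_eq e G]
    exact tsum_congr hpt
  have lhs_eq : wp ω (z + lam) = 1 / (z + lam) ^ 2 + ∑' a, G a := rfl
  have rhs_eq : wp ω z = 1 / z ^ 2 + ∑' a, F a := rfl
  rw [lhs_eq, rhs_eq, hG_eq, Summable.tsum_add h1 hhs, hsum_h]
  ring

lemma tau_key : tau = 1 + (1 + tau) * sqrtm3 := by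
  unfold tau sqrtm3
  linear_combination (-(Complex.I ^ 2) / 2) * sqrt3_sq + (-(3:ℂ) / 2) * Complex.I_sq

lemma sqrtm3_ne_zero : sqrtm3 ≠ 0 := by
  unfold sqrtm3
  apply mul_ne_zero _ Complex.I_ne_zero
  simp only [ne_eq, Complex.ofReal_eq_zero]
  positivity

lemma abs_sqrtm3 : ‖sqrtm3‖ = Real.sqrt 3 := by
  unfold sqrtm3
  rw [norm_mul, Complex.norm_real, Real.norm_eq_abs, Complex.norm_I, _root_.abs_of_nonneg (Real.sqrt_nonneg 3), mul_one]

lemma abs_tau : ‖tau‖ = 1 := by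
  have hsq : ‖tau‖ ^ 2 = 1 := by
    rw [Complex.sq_norm, Complex.normSq_apply, tau_re, tau_im]
    have h3 : Real.sqrt 3 ^ 2 = 3 := Real.sq_sqrt (by norm_num)
    nlinarith
  nlinarith [norm_nonneg tau]

lemma one_add_tau_ne_zero : (1 : ℂ) + tau ≠ 0 := by
  intro h
  have := congrArg Complex.re h
  rw [Complex.add_re, Complex.one_re, tau_re] at this
  norm_num at this


/-- From [Qiu], (2.14): `℘(ω/√−3) = 0`, with `√−3 = 1 + 2τ` the square root of `−3` with positive imaginary part.
Here `ω > 0` is pinned down by the differential equation `℘′² = 4℘³ − 1` for the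
lattice `L_ω = ω·ℤ[τ]` (equivalently, the lattice invariants are `g₂ = 0`, `g₃ = 1`). -/
theorem wp_value_at_omega_div_sqrt
    (ω : ℝ) (hω : 0 < ω)
    (hODE : ∀ z : ℂ, ¬ inLattice ω z → deriv (wp ω) z ^ 2 = 4 * wp ω z ^ 3 - 1) :
    wp ω ((ω : ℂ) / sqrtm3) = 0 := by
  set z : ℂ := (ω : ℂ) / sqrtm3 with hz
  set lam : ℂ := (ω : ℂ) * (1 + tau) with hlam
  have hω0 : (ω : ℂ) ≠ 0 := Complex.ofReal_ne_zero.mpr (ne_of_gt hω)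
  have htz : tau * z = z + lam := by
    rw [hz, hlam]
    field_simp [sqrtm3_ne_zero]
    linear_combination tau_key
  have hlamL : inLattice ω lam := ⟨1 + tauO, by push_cast [tauO]; rw [hlam]⟩
  have hlam0 : lam ≠ 0 := mul_ne_zero hω0 one_add_tau_ne_zero
  have hs3pos : (0 : ℝ) < Real.sqrt 3 := Real.sqrt_pos.mpr (by norm_num)
  have habs_z : ‖z‖ * Real.sqrt 3 = ω := by
    rw [hz, norm_div, abs_sqrtm3, Complex.norm_real, Real.norm_eq_abs, abs_of_pos hω,
      div_mul_cancel₀ _ (ne_of_gt hs3pos)]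
  have h1 : Summable fun a : Idx ω => 1 / (z - (a : ℂ)) ^ 2 - 1 / (a : ℂ) ^ 2 :=
    summable_F hω (le_of_eq habs_z)
  have h2 : Summable fun a : Idx ω => 1 / (z + lam - (a : ℂ)) ^ 2 - 1 / (a : ℂ) ^ 2 := by
    apply summable_F hω
    rw [← htz, norm_mul, abs_tau, one_mul]
    exact le_of_eq habs_z
  have hper : wp ω (z + lam) = wp ω z := wp_add_lattice z lam hlamL hlam0 h1 h2
  have hhom : wp ω (tau * z) = tau * wp ω z := wp_tau_mul ω z
  have heq : tau * wp ω z = wp ω z := by rw [← hhom, htz, hper]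
  have htau1 : tau ≠ 1 := by
    intro h
    have := congrArg Complex.re h
    rw [tau_re, Complex.one_re] at this
    norm_num at this
  have : (tau - 1) * wp ω z = 0 := by linear_combination heq
  rcases mul_eq_zero.mp this with h | h
  · exact absurd (by linear_combination h) htau1
  · exact h
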